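/- Let U ⊆ ℝ² be open, σ = (x,y,t) : U → ℝ³ a C² map with (N₁,N₂)(u,v) ≠ (0,0) for all (u,v) ∈ U, let Ω ⊆ ℝ³ be open with σ(U) ⊆ Ω, and let ν₁, ν₂ : Ω → ℝ be C¹ functions with ν₁² + ν₂² = 1 on Ω such that (ν₁∘σ, ν₂∘σ) = (N₁,N₂)/√(N₁²+N₂²) on U. Then at every (u,v) ∈ U with ∂(x,y)(u,v) ≠ 0, (Xν₁ + Yν₂)(σ(u,v)) = (∂(ν₁∘σ, y) + ∂(x, ν₂∘σ))/∂(x,y) evaluated at (u,v). (Local coordinate formula for the horizontal mean curvature.) -/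

import Mathlib

/-- Partial derivative in the first variable. -/
noncomputable def pu (f : ℝ × ℝ → ℝ) (p : ℝ × ℝ) : ℝ := deriv (fun u => f (u, p.2)) p.1

/-- Partial derivative in the second variable. -/
noncomputable def pv (f : ℝ × ℝ → ℝ) (p : ℝ × ℝ) : ℝ := deriv (fun v => f (p.1, v)) p.2

/-- Jacobian ∂(f,g) = f_u g_v − f_v g_u. -/
noncomputable def jac (f g : ℝ × ℝ → ℝ) (p : ℝ × ℝ) : ℝ :=
  pu f p * pv g p - pv f p * pu g p

/-- First component of the horizontal normal: N₁ = ∂(y,t) + 2y ∂(x,y). -/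
noncomputable def N1 (x y t : ℝ × ℝ → ℝ) (p : ℝ × ℝ) : ℝ :=
  jac y t p + 2 * y p * jac x y p

/-- Second component of the horizontal normal: N₂ = ∂(t,x) − 2x ∂(x,y). -/
noncomputable def N2 (x y t : ℝ × ℝ → ℝ) (p : ℝ × ℝ) : ℝ :=
  jac t x p - 2 * x p * jac x y p

/-- The Heisenberg horizontal vector field X = ∂/∂x + 2y ∂/∂t acting on a function
of (x,y,t) ∈ ℝ³. -/
noncomputable def Xop (f : ℝ × ℝ × ℝ → ℝ) (p : ℝ × ℝ × ℝ) : ℝ :=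
  deriv (fun x => f (x, p.2.1, p.2.2)) p.1
    + 2 * p.2.1 * deriv (fun t => f (p.1, p.2.1, t)) p.2.2

/-- The Heisenberg horizontal vector field Y = ∂/∂y − 2x ∂/∂t acting on a function
of (x,y,t) ∈ ℝ³. -/
noncomputable def Yop (f : ℝ × ℝ × ℝ → ℝ) (p : ℝ × ℝ × ℝ) : ℝ :=
  deriv (fun y => f (p.1, y, p.2.2)) p.2.1
    - 2 * p.1 * deriv (fun t => f (p.1, p.2.1, t)) p.2.2

/-- local coordinate formula for the horizontal mean curvature. If
(ν₁,ν₂) is a C¹ extension to an open Ω ⊇ σ(U) of the unit horizontal normal of a C²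
noncharacteristic patch σ = (x,y,t), then at each point where ∂(x,y) ≠ 0,
Xν₁ + Yν₂ = (∂(ν₁∘σ, y) + ∂(x, ν₂∘σ))/∂(x,y). -/
lemma apply_triple (A : ℝ×ℝ×ℝ →L[ℝ] ℝ) (a b c : ℝ) :
    A (a,b,c) = a * A (1,0,0) + b * A (0,1,0) + c * A (0,0,1) := by
  have h : (a,b,c) = a • ((1,0,0) : ℝ×ℝ×ℝ) + b • ((0,1,0) : ℝ×ℝ×ℝ) + c • ((0,0,1) : ℝ×ℝ×ℝ) := by
    simp [Prod.ext_iff]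
  rw [h, map_add, map_add, map_smul, map_smul, map_smul, smul_eq_mul, smul_eq_mul, smul_eq_mul]

theorem stmt_7 (U : Set (ℝ × ℝ)) (hU : IsOpen U)
    (x y t : ℝ × ℝ → ℝ)
    (hx : ContDiffOn ℝ 2 x U) (hy : ContDiffOn ℝ 2 y U) (ht : ContDiffOn ℝ 2 t U)
    (hN : ∀ p ∈ U, ¬(N1 x y t p = 0 ∧ N2 x y t p = 0))
    (Ω : Set (ℝ × ℝ × ℝ)) (hΩ : IsOpen Ω)
    (hσΩ : ∀ p ∈ U, (x p, y p, t p) ∈ Ω)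
    (ν₁ ν₂ : ℝ × ℝ × ℝ → ℝ)
    (hν₁ : ContDiffOn ℝ 1 ν₁ Ω) (hν₂ : ContDiffOn ℝ 1 ν₂ Ω)
    (hunit : ∀ q ∈ Ω, ν₁ q ^ 2 + ν₂ q ^ 2 = 1)
    (hrestr : ∀ p ∈ U,
      ν₁ (x p, y p, t p) = N1 x y t p / Real.sqrt (N1 x y t p ^ 2 + N2 x y t p ^ 2) ∧
      ν₂ (x p, y p, t p) = N2 x y t p / Real.sqrt (N1 x y t p ^ 2 + N2 x y t p ^ 2)) :
    ∀ p ∈ U, jac x y p ≠ 0 →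
      Xop ν₁ (x p, y p, t p) + Yop ν₂ (x p, y p, t p)
        = (jac (fun q => ν₁ (x q, y q, t q)) y p
            + jac x (fun q => ν₂ (x q, y q, t q)) p) / jac x y p := by
  intro p hp hJ
  have hqΩ : (x p, y p, t p) ∈ Ω := hσΩ p hp
  have hxd : DifferentiableAt ℝ x p :=
    (hx.contDiffAt (hU.mem_nhds hp)).differentiableAt (by norm_num)
  have hyd : DifferentiableAt ℝ y p :=
    (hy.contDiffAt (hU.mem_nhds hp)).differentiableAt (by norm_num)
  have htd : DifferentiableAt ℝ t p :=
    (ht.contDiffAt (hU.mem_nhds hp)).differentiableAt (by norm_num)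
  have hν₁d : DifferentiableAt ℝ ν₁ (x p, y p, t p) :=
    (hν₁.contDiffAt (hΩ.mem_nhds hqΩ)).differentiableAt (by norm_num)
  have hν₂d : DifferentiableAt ℝ ν₂ (x p, y p, t p) :=
    (hν₂.contDiffAt (hΩ.mem_nhds hqΩ)).differentiableAt (by norm_num)
  obtain ⟨A, hAq⟩ : ∃ A : ℝ×ℝ×ℝ →L[ℝ] ℝ, HasFDerivAt ν₁ A (x p, y p, t p) :=
    ⟨_, hν₁d.hasFDerivAt⟩
  obtain ⟨B, hBq⟩ : ∃ B : ℝ×ℝ×ℝ →L[ℝ] ℝ, HasFDerivAt ν₂ B (x p, y p, t p) :=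
    ⟨_, hν₂d.hasFDerivAt⟩
  set a1 := A (1,0,0) with ha1
  set a2 := A (0,1,0) with ha2
  set a3 := A (0,0,1) with ha3
  set b1 := B (1,0,0) with hb1
  set b2 := B (0,1,0) with hb2
  set b3 := B (0,0,1) with hb3
  -- the one-variable derivatives appearing in Xop, Yop
  have hX1 : deriv (fun s => ν₁ (s, y p, t p)) (x p) = a1 := by
    have hc : HasDerivAt (fun s : ℝ => ((s, y p, t p) : ℝ×ℝ×ℝ)) (1,0,0) (x p) :=
      HasDerivAt.prodMk (hasDerivAt_id _) (HasDerivAt.prodMk (hasDerivAt_const _ _) (hasDerivAt_const _ _))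
    exact (hAq.comp_hasDerivAt _ hc).deriv
  have hX3 : deriv (fun s => ν₁ (x p, y p, s)) (t p) = a3 := by
    have hc : HasDerivAt (fun s : ℝ => ((x p, y p, s) : ℝ×ℝ×ℝ)) (0,0,1) (t p) :=
      HasDerivAt.prodMk (hasDerivAt_const _ _) (HasDerivAt.prodMk (hasDerivAt_const _ _) (hasDerivAt_id _))
    exact (hAq.comp_hasDerivAt _ hc).deriv
  have hY2 : deriv (fun s => ν₂ (x p, s, t p)) (y p) = b2 := by
    have hc : HasDerivAt (fun s : ℝ => ((x p, s, t p) : ℝ×ℝ×ℝ)) (0,1,0) (y p) :=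
      HasDerivAt.prodMk (hasDerivAt_const _ _) (HasDerivAt.prodMk (hasDerivAt_id _) (hasDerivAt_const _ _))
    exact (hBq.comp_hasDerivAt _ hc).deriv
  have hY3 : deriv (fun s => ν₂ (x p, y p, s)) (t p) = b3 := by
    have hc : HasDerivAt (fun s : ℝ => ((x p, y p, s) : ℝ×ℝ×ℝ)) (0,0,1) (t p) :=
      HasDerivAt.prodMk (hasDerivAt_const _ _) (HasDerivAt.prodMk (hasDerivAt_const _ _) (hasDerivAt_id _))
    exact (hBq.comp_hasDerivAt _ hc).deriv
  -- partial derivatives of the patch along coordinate lines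
  have hxu : HasDerivAt (fun u => x (u, p.2)) (pu x p) p.1 :=
    (hxd.comp p.1 (differentiableAt_id.prodMk (differentiableAt_const _))).hasDerivAt
  have hyu : HasDerivAt (fun u => y (u, p.2)) (pu y p) p.1 :=
    (hyd.comp p.1 (differentiableAt_id.prodMk (differentiableAt_const _))).hasDerivAt
  have htu : HasDerivAt (fun u => t (u, p.2)) (pu t p) p.1 :=
    (htd.comp p.1 (differentiableAt_id.prodMk (differentiableAt_const _))).hasDerivAt
  have hxv : HasDerivAt (fun v => x (p.1, v)) (pv x p) p.2 :=
    (hxd.comp p.2 (DifferentiableAt.prodMk (differentiableAt_const _) differentiableAt_id)).hasDerivAt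
  have hyv : HasDerivAt (fun v => y (p.1, v)) (pv y p) p.2 :=
    (hyd.comp p.2 (DifferentiableAt.prodMk (differentiableAt_const _) differentiableAt_id)).hasDerivAt
  have htv : HasDerivAt (fun v => t (p.1, v)) (pv t p) p.2 :=
    (htd.comp p.2 (DifferentiableAt.prodMk (differentiableAt_const _) differentiableAt_id)).hasDerivAt
  have hcu : HasDerivAt (fun u : ℝ => ((x (u, p.2), y (u, p.2), t (u, p.2)) : ℝ×ℝ×ℝ))
      (pu x p, pu y p, pu t p) p.1 := HasDerivAt.prodMk hxu (HasDerivAt.prodMk hyu htu)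
  have hcv : HasDerivAt (fun v : ℝ => ((x (p.1, v), y (p.1, v), t (p.1, v)) : ℝ×ℝ×ℝ))
      (pv x p, pv y p, pv t p) p.2 := HasDerivAt.prodMk hxv (HasDerivAt.prodMk hyv htv)
  -- chain rule for ν ∘ σ along coordinate lines
  have h1u : pu (fun r => ν₁ (x r, y r, t r)) p
      = a1 * pu x p + a2 * pu y p + a3 * pu t p := by
    have h := (hAq.comp_hasDerivAt p.1 hcu).deriv
    simp only [Function.comp_def] at h
    rw [pu, h, apply_triple, ← ha1, ← ha2, ← ha3]; ring
  have h1v : pv (fun r => ν₁ (x r, y r, t r)) p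
      = a1 * pv x p + a2 * pv y p + a3 * pv t p := by
    have h := (hAq.comp_hasDerivAt p.2 hcv).deriv
    simp only [Function.comp_def] at h
    rw [pv, h, apply_triple, ← ha1, ← ha2, ← ha3]; ring
  have h2u : pu (fun r => ν₂ (x r, y r, t r)) p
      = b1 * pu x p + b2 * pu y p + b3 * pu t p := by
    have h := (hBq.comp_hasDerivAt p.1 hcu).deriv
    simp only [Function.comp_def] at h
    rw [pu, h, apply_triple, ← hb1, ← hb2, ← hb3]; ring
  have h2v : pv (fun r => ν₂ (x r, y r, t r)) p
      = b1 * pv x p + b2 * pv y p + b3 * pv t p := by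
    have h := (hBq.comp_hasDerivAt p.2 hcv).deriv
    simp only [Function.comp_def] at h
    rw [pv, h, apply_triple, ← hb1, ← hb2, ← hb3]; ring
  -- differentiate the unit constraint
  have hD : HasFDerivAt (fun r => ν₁ r * ν₁ r + ν₂ r * ν₂ r)
      ((ν₁ (x p, y p, t p) • A + ν₁ (x p, y p, t p) • A)
        + (ν₂ (x p, y p, t p) • B + ν₂ (x p, y p, t p) • B)) (x p, y p, t p) :=
    (hAq.mul hAq).add (hBq.mul hBq)
  have hEq : (fun r => ν₁ r * ν₁ r + ν₂ r * ν₂ r) =ᶠ[nhds ((x p, y p, t p) : ℝ×ℝ×ℝ)]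
      fun _ => (1:ℝ) := by
    filter_upwards [hΩ.mem_nhds hqΩ] with r hr
    have h := hunit r hr
    nlinarith [h]
  have hD0 : HasFDerivAt (fun r => ν₁ r * ν₁ r + ν₂ r * ν₂ r)
      (0 : ℝ×ℝ×ℝ →L[ℝ] ℝ) (x p, y p, t p) :=
    (hasFDerivAt_const (1:ℝ) _).congr_of_eventuallyEq hEq
  have hzero := hD.unique hD0
  have hC : ν₁ (x p, y p, t p) * a3 + ν₂ (x p, y p, t p) * b3 = 0 := by
    have h := congrArg (fun (L : ℝ×ℝ×ℝ →L[ℝ] ℝ) => L (0,0,1)) hzero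
    simp only [ContinuousLinearMap.add_apply, ContinuousLinearMap.coe_smul',
      Pi.smul_apply, smul_eq_mul, ContinuousLinearMap.zero_apply] at h
    rw [ha3, hb3]
    linarith [h]
  have hNpos : 0 < N1 x y t p ^ 2 + N2 x y t p ^ 2 := by
    rcases not_and_or.mp (hN p hp) with h | h <;> positivity
  have hr : 0 < Real.sqrt (N1 x y t p ^ 2 + N2 x y t p ^ 2) := Real.sqrt_pos.mpr hNpos
  obtain ⟨hr1, hr2⟩ := hrestr p hp
  have hcon : a3 * N1 x y t p + b3 * N2 x y t p = 0 := by
    rw [hr1, hr2] at hC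
    field_simp at hC
    linarith [hC]
  -- final algebra
  have hXval : Xop ν₁ (x p, y p, t p) = a1 + 2 * y p * a3 := by
    show deriv (fun s => ν₁ (s, y p, t p)) (x p)
      + 2 * y p * deriv (fun s => ν₁ (x p, y p, s)) (t p) = a1 + 2 * y p * a3
    rw [hX1, hX3]
  have hYval : Yop ν₂ (x p, y p, t p) = b2 - 2 * x p * b3 := by
    show deriv (fun s => ν₂ (x p, s, t p)) (y p)
      - 2 * x p * deriv (fun s => ν₂ (x p, y p, s)) (t p) = b2 - 2 * x p * b3
    rw [hY2, hY3]
  rw [hXval, hYval, jac, jac, h1u, h1v, h2u, h2v, eq_div_iff hJ]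
  simp only [N1, N2, jac] at hcon
  rw [jac]
  linear_combination hcon
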